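/- Let v, y, p, q be points in the Euclidean plane with y, p, q pairwise distinct, and let D₁ be the closed disk of center c₁ and radius r₁ with y, p, q on its boundary circle. Suppose dist(v,c₁) > r₁ (v is strictly outside D₁), dist(v,y) ≤ 1, dist(v,p) ≤ 1, dist(v,q) > 1, and the segments [v,y] and [p,q] cross. Let D₂ be the closed disk of center c₂ and radius r₂ with v and y on its boundary circle and with dist(p,c₂) > r₂ (p is strictly outside D₂). Then every point of the boundary circle of D₁ at distance greater than 1 from v lies in the open interior of D₂: (sphere(c₁,r₁) \ closedBall(v,1)) ⊆ ball(c₂,r₂). -/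

import Mathlib

open Metric

local notation "E2" => EuclideanSpace ℝ (Fin 2)

/-- affine-type function -/
def IsAff (F : EuclideanSpace ℝ (Fin 2) → ℝ) : Prop :=
  ∀ x y : EuclideanSpace ℝ (Fin 2), ∀ s t : ℝ, s + t = 1 → F (s • x + t • y) = s * F x + t * F y

lemma pow_shift (a x u : E2) (t : ℝ) :
    dist (x + t • u) a ^ 2 = dist x a ^ 2 + 2 * t * inner ℝ (x - a) u + t ^ 2 * ‖u‖ ^ 2 := by
  rw [dist_eq_norm, dist_eq_norm]
  have h : x + t • u - a = (x - a) + t • u := by abel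
  rw [h, norm_add_sq_real, real_inner_smul_right, norm_smul]
  simp [mul_pow]
  ring

lemma aff_pow (a b : E2) (k : ℝ) : IsAff (fun z => dist z a ^ 2 - dist z b ^ 2 + k) := by
  intro x y s t hst
  have hxy : s • x + t • y = x + t • (y - x) := by
    have hs : s = 1 - t := by linarith
    rw [hs]; module
  have h1 := pow_shift a x (y - x) t
  have h2 := pow_shift b x (y - x) t
  have h3 := pow_shift a x (y - x) 1
  have h4 := pow_shift b x (y - x) 1
  have hy : x + (1:ℝ) • (y - x) = y := by module
  rw [hy] at h3 h4
  simp only [hxy]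
  have hs : s = 1 - t := by linarith
  rw [h1, h2, h3, h4, hs]; ring

lemma seg_comb {F : E2 → ℝ} (hF : IsAff F) {u a b : E2} (h : u ∈ segment ℝ a b) :
    ∃ s t : ℝ, 0 ≤ s ∧ 0 ≤ t ∧ s + t = 1 ∧ s • a + t • b = u ∧ F u = s * F a + t * F b := by
  obtain ⟨s, t, hs, ht, hst, hu⟩ := h
  exact ⟨s, t, hs, ht, hst, hu, by rw [← hu, hF a b s t hst]⟩

lemma oseg_comb {F : E2 → ℝ} (hF : IsAff F) {u a b : E2} (h : u ∈ openSegment ℝ a b) :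
    ∃ s t : ℝ, 0 < s ∧ 0 < t ∧ s + t = 1 ∧ s • a + t • b = u ∧ F u = s * F a + t * F b := by
  obtain ⟨s, t, hs, ht, hst, hu⟩ := h
  exact ⟨s, t, hs, ht, hst, hu, by rw [← hu, hF a b s t hst]⟩

lemma cvx_pos {s t A B : ℝ} (hs : 0 ≤ s) (ht : 0 ≤ t) (hst : s + t = 1)
    (hA : 0 < A) (hB : 0 < B) : 0 < s * A + t * B := by
  rcases le_total A B with h | h
  · nlinarith
  · nlinarith

lemma cvx_nonneg {s t A B : ℝ} (hs : 0 ≤ s) (ht : 0 ≤ t)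
    (hA : 0 ≤ A) (hB : 0 ≤ B) : 0 ≤ s * A + t * B := by positivity

lemma cvx_neg {s t A B : ℝ} (hs : 0 ≤ s) (ht : 0 ≤ t) (hst : s + t = 1)
    (hA : A < 0) (hB : B < 0) : s * A + t * B < 0 := by
  rcases le_total A B with h | h
  · nlinarith
  · nlinarith

lemma cvx_nonpos {s t A B : ℝ} (hs : 0 ≤ s) (ht : 0 ≤ t)
    (hA : A ≤ 0) (hB : B ≤ 0) : s * A + t * B ≤ 0 := by nlinarith

lemma cvx_neg' {s t A B : ℝ} (hs : 0 < s) (ht : 0 ≤ t) (hA : A < 0) (hB : B ≤ 0) :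
    s * A + t * B < 0 := by nlinarith

lemma opp_sign {s t A B : ℝ} (hs : 0 < s) (ht : 0 < t) (hA : A ≠ 0)
    (h : s * A + t * B = 0) : A * B < 0 := by
  have hA2 : 0 < A ^ 2 := by positivity
  have key : t * (A * B) = -(s * A ^ 2) := by
    have : B = -(s*A)/t := by field_simp; linarith
    rw [this]; field_simp
  nlinarith [mul_pos hs hA2]

/-- a sphere point inside a segment of ball points must be an endpoint -/
lemma extreme_seg {o z a b : E2} {r : ℝ} (hr : 0 < r) (hz : dist z o = r)
    (ha : dist a o ≤ r) (hb : dist b o ≤ r) (hs : z ∈ segment ℝ a b) : z = a ∨ z = b := by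
  by_contra hcon
  push_neg at hcon
  have hab : a ≠ b := by
    rintro rfl
    rw [segment_same] at hs
    exact hcon.1 hs
  have hz' : z ∈ openSegment ℝ a b :=
    mem_openSegment_of_ne_left_right (Ne.symm hcon.1) (Ne.symm hcon.2) hs
  have hsub := (strictConvex_closedBall ℝ o r).openSegment_subset
    (mem_closedBall.2 ha) (mem_closedBall.2 hb) hab
  have := hsub hz'
  rw [interior_closedBall o hr.ne'] at this
  rw [mem_ball] at this
  linarith [hz ▸ this]

lemma aff_L (p q : E2) :
    IsAff (fun z => (z 0 - p 0) * (q 1 - p 1) - (z 1 - p 1) * (q 0 - p 0)) := by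
  intro x y s t hst
  simp only [PiLp.add_apply, PiLp.smul_apply, smul_eq_mul]
  rw [show s = 1 - t by linarith]
  ring

lemma line_of_L {o : E2} {r : ℝ} (hr : 0 < r) {z p q : E2} (hz : dist z o = r)
    (hp : dist p o = r) (hq : dist q o = r) (hpq : p ≠ q)
    (hL : (z 0 - p 0) * (q 1 - p 1) - (z 1 - p 1) * (q 0 - p 0) = 0) : z = p ∨ z = q := by
  have hd : 0 < (q 0 - p 0) ^ 2 + (q 1 - p 1) ^ 2 := by
    rcases lt_or_ge 0 ((q 0 - p 0) ^ 2 + (q 1 - p 1) ^ 2) with h | h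
    · exact h
    · exfalso
      apply hpq
      have h0 : q 0 - p 0 = 0 := by nlinarith [sq_nonneg (q 0 - p 0), sq_nonneg (q 1 - p 1)]
      have h1 : q 1 - p 1 = 0 := by nlinarith [sq_nonneg (q 0 - p 0), sq_nonneg (q 1 - p 1)]
      ext i
      fin_cases i
      · show p 0 = q 0; linarith
      · show p 1 = q 1; linarith
  set lam := ((z 0 - p 0) * (q 0 - p 0) + (z 1 - p 1) * (q 1 - p 1)) /
      ((q 0 - p 0) ^ 2 + (q 1 - p 1) ^ 2) with hlam
  have hz' : z = p + lam • (q - p) := by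
    ext i
    fin_cases i
    · show z 0 = (p + lam • (q - p)) 0
      simp only [PiLp.add_apply, PiLp.smul_apply, PiLp.sub_apply, smul_eq_mul, hlam]
      field_simp
      linear_combination (q 1 - p 1) * hL
    · show z 1 = (p + lam • (q - p)) 1
      simp only [PiLp.add_apply, PiLp.smul_apply, PiLp.sub_apply, smul_eq_mul, hlam]
      field_simp
      linear_combination (-(q 0 - p 0)) * hL
  rcases le_or_gt 0 lam with h0 | h0
  · rcases le_or_gt lam 1 with h1 | h1
    · -- z ∈ segment p q
      have hmem : z ∈ segment ℝ p q := by
        refine ⟨1 - lam, lam, by linarith, h0, by ring, ?_⟩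
        rw [hz']; module
      exact extreme_seg hr hz hp.le hq.le hmem
    · -- q ∈ segment p z
      have hlam0 : lam ≠ 0 := by positivity
      have hmem : q ∈ segment ℝ p z := by
        refine ⟨1 - 1/lam, 1/lam, by
          rw [sub_nonneg]
          exact div_le_one_of_le₀ (by linarith) (by linarith), by positivity, by ring, ?_⟩
        rw [hz']
        match_scalars <;> field_simp <;> ring
      rcases extreme_seg hr hq hp.le hz.le hmem with h | h
      · exact absurd h.symm hpq
      · exact Or.inr h.symm
  · -- p ∈ segment z q
    have hmem : p ∈ segment ℝ z q := by
      have hne : (1:ℝ) - lam > 0 := by linarith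
      refine ⟨1/(1-lam), -lam/(1-lam), by positivity,
        div_nonneg (by linarith) (by linarith), ?_, ?_⟩
      · field_simp
        ring
      · rw [hz']
        match_scalars <;> field_simp <;> ring
    rcases extreme_seg hr hp hz.le hq.le hmem with h | h
    · exact Or.inl h.symm
    · exact absurd h hpq

lemma not_in_tri {o : E2} {r : ℝ} (hr : 0 < r) {z b d e : E2} (hz : dist z o = r)
    (hb : dist b o ≤ r) (hd : dist d o ≤ r) (he : dist e o ≤ r)
    (h : z ∈ convexHull ℝ ({b, d, e} : Set E2)) : z = b ∨ z = d ∨ z = e := by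
  rw [convexHull_insert (by exact ⟨d, by simp⟩), convexHull_pair] at h
  rw [mem_convexJoin] at h
  obtain ⟨b', hb', m, hm, hseg⟩ := h
  rw [Set.mem_singleton_iff] at hb'
  subst hb'
  have hmo : dist m o ≤ r := by
    have := (convex_closedBall o r).segment_subset (mem_closedBall.2 hd) (mem_closedBall.2 he) hm
    exact mem_closedBall.1 this
  rcases extreme_seg hr hz hb hmo hseg with h' | h'
  · exact Or.inl h'
  · subst h'
    rcases extreme_seg hr hz hd he hm with h' | h'
    · exact Or.inr (Or.inl h')
    · exact Or.inr (Or.inr h')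


lemma four_point {o : E2} {r : ℝ} (hr : 0 < r) (a b d e : E2)
    (hA : dist a o = r) (hB : dist b o = r) (hD : dist d o = r) (hE : dist e o = r)
    (hab : a ≠ b) (had : a ≠ d) (hae : a ≠ e) (hbd : b ≠ d) (hbe : b ≠ e) (hde : d ≠ e) :
    (∃ u, u ∈ segment ℝ a b ∧ u ∈ segment ℝ d e) ∨
    (∃ u, u ∈ segment ℝ a d ∧ u ∈ segment ℝ b e) ∨
    (∃ u, u ∈ segment ℝ a e ∧ u ∈ segment ℝ b d) := by
  classical
  have hnai : ¬ AffineIndependent ℝ (![a,b,d,e] : Fin 4 → E2) := by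
    intro hai
    have h1 := hai.card_le_finrank_succ
    have h2 : Module.finrank ℝ (vectorSpan ℝ (Set.range (![a,b,d,e] : Fin 4 → E2))) ≤
        Module.finrank ℝ (EuclideanSpace ℝ (Fin 2)) := Submodule.finrank_le _
    rw [finrank_euclideanSpace] at h2
    simp [Fintype.card_fin] at h1 h2
    omega
  obtain ⟨I, u, huI, huIc⟩ := Convex.radon_partition hnai
  by_cases h0 : (0 : Fin 4) ∈ I <;> by_cases h1 : (1 : Fin 4) ∈ I <;>
    by_cases h2 : (2 : Fin 4) ∈ I <;> by_cases h3 : (3 : Fin 4) ∈ I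
  · have hsub' : (![a,b,d,e]) '' Iᶜ ⊆ (∅ : Set E2) := by
      rintro z ⟨i, hi, rfl⟩; fin_cases i <;> simp_all
    have k2 := convexHull_mono hsub' huIc
    rw [convexHull_empty] at k2
    exact k2.elim
  · have hsub : (![a,b,d,e]) '' I ⊆ ({a, b, d} : Set E2) := by
      rintro z ⟨i, hi, rfl⟩; fin_cases i <;> simp_all
    have hsub' : (![a,b,d,e]) '' Iᶜ ⊆ ({e} : Set E2) := by
      rintro z ⟨i, hi, rfl⟩; fin_cases i <;> simp_all
    have k1 := convexHull_mono hsub huI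
    have k2 := convexHull_mono hsub' huIc
    rw [convexHull_singleton, Set.mem_singleton_iff] at k2
    subst k2
    rcases not_in_tri hr hE hA.le hB.le hD.le k1 with h|h|h
    · exact absurd h hae.symm
    · exact absurd h hbe.symm
    · exact absurd h hde.symm
  · have hsub : (![a,b,d,e]) '' I ⊆ ({a, b, e} : Set E2) := by
      rintro z ⟨i, hi, rfl⟩; fin_cases i <;> simp_all
    have hsub' : (![a,b,d,e]) '' Iᶜ ⊆ ({d} : Set E2) := by
      rintro z ⟨i, hi, rfl⟩; fin_cases i <;> simp_all
    have k1 := convexHull_mono hsub huI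
    have k2 := convexHull_mono hsub' huIc
    rw [convexHull_singleton, Set.mem_singleton_iff] at k2
    subst k2
    rcases not_in_tri hr hD hA.le hB.le hE.le k1 with h|h|h
    · exact absurd h had.symm
    · exact absurd h hbd.symm
    · exact absurd h hde
  · have hsub : (![a,b,d,e]) '' I ⊆ ({a, b} : Set E2) := by
      rintro z ⟨i, hi, rfl⟩; fin_cases i <;> simp_all
    have hsub' : (![a,b,d,e]) '' Iᶜ ⊆ ({d, e} : Set E2) := by
      rintro z ⟨i, hi, rfl⟩; fin_cases i <;> simp_all
    have k1 := convexHull_mono hsub huI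
    have k2 := convexHull_mono hsub' huIc
    rw [convexHull_pair] at k1 k2
    exact Or.inl ⟨u, k1, k2⟩
  · have hsub : (![a,b,d,e]) '' I ⊆ ({a, d, e} : Set E2) := by
      rintro z ⟨i, hi, rfl⟩; fin_cases i <;> simp_all
    have hsub' : (![a,b,d,e]) '' Iᶜ ⊆ ({b} : Set E2) := by
      rintro z ⟨i, hi, rfl⟩; fin_cases i <;> simp_all
    have k1 := convexHull_mono hsub huI
    have k2 := convexHull_mono hsub' huIc
    rw [convexHull_singleton, Set.mem_singleton_iff] at k2
    subst k2
    rcases not_in_tri hr hB hA.le hD.le hE.le k1 with h|h|h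
    · exact absurd h hab.symm
    · exact absurd h hbd
    · exact absurd h hbe
  · have hsub : (![a,b,d,e]) '' I ⊆ ({a, d} : Set E2) := by
      rintro z ⟨i, hi, rfl⟩; fin_cases i <;> simp_all
    have hsub' : (![a,b,d,e]) '' Iᶜ ⊆ ({b, e} : Set E2) := by
      rintro z ⟨i, hi, rfl⟩; fin_cases i <;> simp_all
    have k1 := convexHull_mono hsub huI
    have k2 := convexHull_mono hsub' huIc
    rw [convexHull_pair] at k1 k2
    exact Or.inr (Or.inl ⟨u, k1, k2⟩)
  · have hsub : (![a,b,d,e]) '' I ⊆ ({a, e} : Set E2) := by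
      rintro z ⟨i, hi, rfl⟩; fin_cases i <;> simp_all
    have hsub' : (![a,b,d,e]) '' Iᶜ ⊆ ({b, d} : Set E2) := by
      rintro z ⟨i, hi, rfl⟩; fin_cases i <;> simp_all
    have k1 := convexHull_mono hsub huI
    have k2 := convexHull_mono hsub' huIc
    rw [convexHull_pair] at k1 k2
    exact Or.inr (Or.inr ⟨u, k1, k2⟩)
  · have hsub : (![a,b,d,e]) '' I ⊆ ({a} : Set E2) := by
      rintro z ⟨i, hi, rfl⟩; fin_cases i <;> simp_all
    have hsub' : (![a,b,d,e]) '' Iᶜ ⊆ ({b, d, e} : Set E2) := by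
      rintro z ⟨i, hi, rfl⟩; fin_cases i <;> simp_all
    have k1 := convexHull_mono hsub huI
    have k2 := convexHull_mono hsub' huIc
    rw [convexHull_singleton, Set.mem_singleton_iff] at k1
    subst k1
    rcases not_in_tri hr hA hB.le hD.le hE.le k2 with h|h|h
    · exact absurd h hab
    · exact absurd h had
    · exact absurd h hae
  · have hsub : (![a,b,d,e]) '' I ⊆ ({b, d, e} : Set E2) := by
      rintro z ⟨i, hi, rfl⟩; fin_cases i <;> simp_all
    have hsub' : (![a,b,d,e]) '' Iᶜ ⊆ ({a} : Set E2) := by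
      rintro z ⟨i, hi, rfl⟩; fin_cases i <;> simp_all
    have k1 := convexHull_mono hsub huI
    have k2 := convexHull_mono hsub' huIc
    rw [convexHull_singleton, Set.mem_singleton_iff] at k2
    subst k2
    rcases not_in_tri hr hA hB.le hD.le hE.le k1 with h|h|h
    · exact absurd h hab
    · exact absurd h had
    · exact absurd h hae
  · have hsub : (![a,b,d,e]) '' I ⊆ ({b, d} : Set E2) := by
      rintro z ⟨i, hi, rfl⟩; fin_cases i <;> simp_all
    have hsub' : (![a,b,d,e]) '' Iᶜ ⊆ ({a, e} : Set E2) := by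
      rintro z ⟨i, hi, rfl⟩; fin_cases i <;> simp_all
    have k1 := convexHull_mono hsub huI
    have k2 := convexHull_mono hsub' huIc
    rw [convexHull_pair] at k1 k2
    exact Or.inr (Or.inr ⟨u, k2, k1⟩)
  · have hsub : (![a,b,d,e]) '' I ⊆ ({b, e} : Set E2) := by
      rintro z ⟨i, hi, rfl⟩; fin_cases i <;> simp_all
    have hsub' : (![a,b,d,e]) '' Iᶜ ⊆ ({a, d} : Set E2) := by
      rintro z ⟨i, hi, rfl⟩; fin_cases i <;> simp_all
    have k1 := convexHull_mono hsub huI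
    have k2 := convexHull_mono hsub' huIc
    rw [convexHull_pair] at k1 k2
    exact Or.inr (Or.inl ⟨u, k2, k1⟩)
  · have hsub : (![a,b,d,e]) '' I ⊆ ({b} : Set E2) := by
      rintro z ⟨i, hi, rfl⟩; fin_cases i <;> simp_all
    have hsub' : (![a,b,d,e]) '' Iᶜ ⊆ ({a, d, e} : Set E2) := by
      rintro z ⟨i, hi, rfl⟩; fin_cases i <;> simp_all
    have k1 := convexHull_mono hsub huI
    have k2 := convexHull_mono hsub' huIc
    rw [convexHull_singleton, Set.mem_singleton_iff] at k1
    subst k1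
    rcases not_in_tri hr hB hA.le hD.le hE.le k2 with h|h|h
    · exact absurd h hab.symm
    · exact absurd h hbd
    · exact absurd h hbe
  · have hsub : (![a,b,d,e]) '' I ⊆ ({d, e} : Set E2) := by
      rintro z ⟨i, hi, rfl⟩; fin_cases i <;> simp_all
    have hsub' : (![a,b,d,e]) '' Iᶜ ⊆ ({a, b} : Set E2) := by
      rintro z ⟨i, hi, rfl⟩; fin_cases i <;> simp_all
    have k1 := convexHull_mono hsub huI
    have k2 := convexHull_mono hsub' huIc
    rw [convexHull_pair] at k1 k2
    exact Or.inl ⟨u, k2, k1⟩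
  · have hsub : (![a,b,d,e]) '' I ⊆ ({d} : Set E2) := by
      rintro z ⟨i, hi, rfl⟩; fin_cases i <;> simp_all
    have hsub' : (![a,b,d,e]) '' Iᶜ ⊆ ({a, b, e} : Set E2) := by
      rintro z ⟨i, hi, rfl⟩; fin_cases i <;> simp_all
    have k1 := convexHull_mono hsub huI
    have k2 := convexHull_mono hsub' huIc
    rw [convexHull_singleton, Set.mem_singleton_iff] at k1
    subst k1
    rcases not_in_tri hr hD hA.le hB.le hE.le k2 with h|h|h
    · exact absurd h had.symm
    · exact absurd h hbd.symm
    · exact absurd h hde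
  · have hsub : (![a,b,d,e]) '' I ⊆ ({e} : Set E2) := by
      rintro z ⟨i, hi, rfl⟩; fin_cases i <;> simp_all
    have hsub' : (![a,b,d,e]) '' Iᶜ ⊆ ({a, b, d} : Set E2) := by
      rintro z ⟨i, hi, rfl⟩; fin_cases i <;> simp_all
    have k1 := convexHull_mono hsub huI
    have k2 := convexHull_mono hsub' huIc
    rw [convexHull_singleton, Set.mem_singleton_iff] at k1
    subst k1
    rcases not_in_tri hr hE hA.le hB.le hD.le k2 with h|h|h
    · exact absurd h hae.symm
    · exact absurd h hbe.symm
    · exact absurd h hde.symm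
  · have hsub : (![a,b,d,e]) '' I ⊆ (∅ : Set E2) := by
      rintro z ⟨i, hi, rfl⟩; fin_cases i <;> simp_all
    have k1 := convexHull_mono hsub huI
    rw [convexHull_empty] at k1
    exact k1.elim

lemma lemA {a b c : ℝ} (h : b < a) (h0 : 0 ≤ b) : 0 < a ^ 2 - c ^ 2 + (c ^ 2 - b ^ 2) := by
  nlinarith
lemma lemB {a b c : ℝ} (h : b ≤ a) (h0 : 0 ≤ b) : 0 ≤ a ^ 2 - c ^ 2 + (c ^ 2 - b ^ 2) := by
  nlinarith
lemma lemC {a b c : ℝ} (h : c < a) (h0 : 0 ≤ c) : b ^ 2 - a ^ 2 + (c ^ 2 - b ^ 2) < 0 := by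
  nlinarith
lemma lemD {a c : ℝ} (h : a ≤ 1) (h0 : 0 ≤ a) : a ^ 2 - c ^ 2 + (c ^ 2 - 1) ≤ 0 := by
  nlinarith
lemma lemE {a c : ℝ} (h : 1 < a) : 0 < a ^ 2 - c ^ 2 + (c ^ 2 - 1) := by nlinarith
lemma lemF {a c : ℝ} (h : c < a) (h0 : 0 ≤ c) : 0 ^ 2 - a ^ 2 + (c ^ 2 - 1) < 0 := by
  nlinarith
lemma prod_pos_of_opp {A B C : ℝ} (h1 : A * C < 0) (h2 : B * C < 0) : 0 < A * B := by
  rcases lt_trichotomy C 0 with h | h | h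
  · have hA : 0 < A := by nlinarith
    have hB : 0 < B := by nlinarith
    exact mul_pos hA hB
  · rw [h] at h1; simp at h1
  · have hA : A < 0 := by nlinarith
    have hB : B < 0 := by nlinarith
    exact mul_pos_of_neg_of_neg hA hB
lemma lemH {A B : ℝ} (h : 0 < A * B) (hA : A < 0) : B < 0 := by nlinarith
lemma lemH' {A B : ℝ} (h : 0 < A * B) (hA : 0 < A) : 0 < B := by nlinarith

/-- Two segments `[u,v]` and `[w,z]` in the plane *cross* if their four endpoints
are not all collinear and there is a point in the open segment of both. -/
def Crosses (u v w z : EuclideanSpace ℝ (Fin 2)) : Prop :=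
  ¬ Collinear ℝ ({u, v, w, z} : Set (EuclideanSpace ℝ (Fin 2))) ∧
    ∃ c, c ∈ openSegment ℝ u v ∧ c ∈ openSegment ℝ w z

set_option maxHeartbeats 1000000 in
theorem stmt_9 (v y p q c₁ c₂ : EuclideanSpace ℝ (Fin 2)) (r₁ r₂ : ℝ)
    (hyp : y ≠ p) (hyq : y ≠ q) (hpq : p ≠ q)
    (hy₁ : y ∈ Metric.sphere c₁ r₁) (hp₁ : p ∈ Metric.sphere c₁ r₁)
    (hq₁ : q ∈ Metric.sphere c₁ r₁)
    (hv₁ : dist v c₁ > r₁)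
    (hvy : dist v y ≤ 1) (hvp : dist v p ≤ 1) (hvq : dist v q > 1)
    (hcross : Crosses v y p q)
    (hv₂ : dist v c₂ = r₂) (hy₂ : dist y c₂ = r₂) (hp₂ : dist p c₂ > r₂) :
    Metric.sphere c₁ r₁ \ Metric.closedBall v 1 ⊆ Metric.ball c₂ r₂ := by
  intro x hx
  obtain ⟨hx₁s, hxv1⟩ := hx
  have hx₁ : dist x c₁ = r₁ := Metric.mem_sphere.1 hx₁s
  have hy₁' : dist y c₁ = r₁ := Metric.mem_sphere.1 hy₁
  have hp₁' : dist p c₁ = r₁ := Metric.mem_sphere.1 hp₁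
  have hq₁' : dist q c₁ = r₁ := Metric.mem_sphere.1 hq₁
  have hxv : 1 < dist x v := by
    rw [Metric.mem_closedBall] at hxv1; push_neg at hxv1; exact hxv1
  rw [Metric.mem_ball]
  by_contra hcon
  push_neg at hcon
  -- radii facts
  have hr₁0 : 0 ≤ r₁ := hy₁' ▸ dist_nonneg
  have hr₁ : 0 < r₁ := by
    rcases hr₁0.lt_or_eq with h | h
    · exact h
    · exfalso
      apply hyp
      have h1 : dist y c₁ = 0 := by rw [hy₁', ← h]
      have h2 : dist p c₁ = 0 := by rw [hp₁', ← h]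
      rw [dist_eq_zero] at h1 h2
      rw [h1, h2]
  have hr₂0 : 0 ≤ r₂ := hv₂ ▸ dist_nonneg
  -- the three affine functions
  set G : EuclideanSpace ℝ (Fin 2) → ℝ :=
    fun z => dist z c₂ ^ 2 - dist z c₁ ^ 2 + (r₁ ^ 2 - r₂ ^ 2) with hGdef
  set H : EuclideanSpace ℝ (Fin 2) → ℝ :=
    fun z => dist z v ^ 2 - dist z c₁ ^ 2 + (r₁ ^ 2 - 1) with hHdef
  set L : EuclideanSpace ℝ (Fin 2) → ℝ :=
    fun z => (z 0 - p 0) * (q 1 - p 1) - (z 1 - p 1) * (q 0 - p 0) with hLdef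
  have hGaff : IsAff G := aff_pow c₂ c₁ _
  have hHaff : IsAff H := aff_pow v c₁ _
  have hLaff : IsAff L := aff_L p q
  -- values of G
  have hGy : G y = 0 := by simp only [hGdef]; rw [hy₂, hy₁']; ring
  have hGp : 0 < G p := by simp only [hGdef]; rw [hp₁']; exact lemA hp₂ hr₂0
  have hGx : 0 ≤ G x := by simp only [hGdef]; rw [hx₁]; exact lemB hcon hr₂0
  have hGv : G v < 0 := by simp only [hGdef]; rw [hv₂]; exact lemC hv₁ hr₁0
  -- values of H
  have hHy : H y ≤ 0 := by
    simp only [hHdef]; rw [hy₁', dist_comm y v]; exact lemD hvy dist_nonneg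
  have hHp : H p ≤ 0 := by
    simp only [hHdef]; rw [hp₁', dist_comm p v]; exact lemD hvp dist_nonneg
  have hHq : 0 < H q := by
    simp only [hHdef]; rw [hq₁', dist_comm q v]; exact lemE hvq
  have hHx : 0 < H x := by simp only [hHdef]; rw [hx₁]; exact lemE hxv
  have hHv : H v < 0 := by
    simp only [hHdef]; rw [dist_self]; exact lemF hv₁ hr₁0
  -- crossing point
  obtain ⟨-, c, hcvy, hcpq⟩ := hcross
  obtain ⟨s, t, hs, ht, hst, hceq, hGc'⟩ := oseg_comb hGaff hcvy
  have hGc : G c < 0 := by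
    rw [hGc', hGy]
    have := mul_neg_of_pos_of_neg hs hGv
    linarith
  have hHc : H c < 0 := by
    obtain ⟨s', t', hs', ht', hst', -, hHc'⟩ := oseg_comb hHaff hcvy
    rw [hHc']
    exact cvx_neg' hs' ht'.le hHv hHy
  have hGq : G q < 0 := by
    obtain ⟨sp, tp, hsp, htp, hspt, -, hGcpq⟩ := oseg_comb hGaff hcpq
    by_contra hcq
    push_neg at hcq
    have h1 := mul_pos hsp hGp
    have h2 : 0 ≤ tp * G q := mul_nonneg htp.le hcq
    linarith [hGcpq, hGc]
  -- L values
  have hLp : L p = 0 := by simp only [hLdef]; ring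
  have hLq : L q = 0 := by simp only [hLdef]; ring
  have hLc : L c = 0 := by
    obtain ⟨s', t', -, -, -, -, h⟩ := oseg_comb hLaff hcpq
    rw [h, hLp, hLq]; ring
  -- c is strictly inside the disk
  have hcball : dist c c₁ < r₁ := by
    have hsub := (strictConvex_closedBall ℝ c₁ r₁).openSegment_subset
      (Metric.mem_closedBall.2 hp₁'.le) (Metric.mem_closedBall.2 hq₁'.le) hpq
    have h := hsub hcpq
    rw [interior_closedBall c₁ hr₁.ne'] at h
    exact Metric.mem_ball.1 h
  -- second intersection point y'' of segment (v,c) with the circle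
  obtain ⟨τ, hτIcc, hτ⟩ : ∃ τ ∈ Set.Icc (0:ℝ) 1, dist ((1-τ) • v + τ • c) c₁ = r₁ := by
    have hφc : ContinuousOn (fun τ : ℝ => dist ((1-τ) • v + τ • c) c₁) (Set.Icc 0 1) := by
      apply Continuous.continuousOn
      exact (((continuous_const.sub continuous_id).smul continuous_const).add
        ((continuous_id).smul continuous_const)).dist continuous_const
    have hmem : r₁ ∈ Set.Icc (dist ((1-(1:ℝ)) • v + (1:ℝ) • c) c₁)
        (dist ((1-(0:ℝ)) • v + (0:ℝ) • c) c₁) := by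
      constructor
      · simp only [sub_self, zero_smul, one_smul, zero_add]
        exact hcball.le
      · simp only [sub_zero, one_smul, zero_smul, add_zero]
        exact hv₁.le
    have h := intermediate_value_Icc' (by norm_num : (0:ℝ) ≤ 1) hφc hmem
    obtain ⟨τ, hτ1, hτ2⟩ := h
    exact ⟨τ, hτ1, hτ2⟩
  have hτ0 : τ ≠ 0 := by
    rintro rfl
    simp only [sub_zero, one_smul, zero_smul, add_zero] at hτ
    linarith [hv₁, hτ]
  have hτne1 : τ ≠ 1 := by
    rintro rfl
    simp only [sub_self, zero_smul, one_smul, zero_add] at hτ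
    linarith [hcball, hτ]
  have hτpos : 0 < τ := lt_of_le_of_ne hτIcc.1 (Ne.symm hτ0)
  have hτlt : τ < 1 := lt_of_le_of_ne hτIcc.2 hτne1
  set w2 : EuclideanSpace ℝ (Fin 2) := (1-τ) • v + τ • c with hy''def
  have hy''₁ : dist w2 c₁ = r₁ := hτ
  have hy''os : w2 ∈ openSegment ℝ v c := ⟨1-τ, τ, by linarith, hτpos, by ring, rfl⟩
  have hGy'' : G w2 < 0 := by
    obtain ⟨s', t', hs', ht', -, -, h⟩ := oseg_comb hGaff hy''os
    rw [h]; exact cvx_neg' hs' ht'.le hGv hGc.le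
  have hHy'' : H w2 < 0 := by
    obtain ⟨s', t', hs', ht', -, -, h⟩ := oseg_comb hHaff hy''os
    rw [h]; exact cvx_neg' hs' ht'.le hHv hHc.le
  -- c lies in the open segment (w2, y)
  have hDpos : 0 < s + (1-τ)*t := by
    have h1 : 0 ≤ (1-τ)*t := mul_nonneg (by linarith) ht.le
    linarith
  have key : s • w2 + ((1-τ)*t) • y = (s + (1-τ)*t) • c := by
    rw [hy''def, ← hceq, show s = 1 - t from by linarith]
    match_scalars <;> ring
  have hco : c ∈ openSegment ℝ w2 y := by
    refine ⟨s/(s+(1-τ)*t), ((1-τ)*t)/(s+(1-τ)*t), div_pos hs hDpos,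
      div_pos (mul_pos (by linarith) ht) hDpos, by field_simp, ?_⟩
    rw [div_eq_inv_mul, div_eq_inv_mul, mul_smul, mul_smul, ← smul_add, key, smul_smul,
      inv_mul_cancel₀ hDpos.ne', one_smul]
  -- distinctness
  have hxp : x ≠ p := fun h => by rw [h] at hHx; linarith
  have hxq : x ≠ q := fun h => by rw [h] at hGx; linarith
  have hxy : x ≠ y := fun h => by rw [h] at hHx; linarith
  have hy''p : w2 ≠ p := fun h => by rw [h] at hGy''; linarith
  have hy''q : w2 ≠ q := fun h => by rw [h] at hHy''; linarith
  have hxy'' : x ≠ w2 := fun h => by rw [h] at hGx; linarith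
  -- nonvanishing of L
  have hLy : L y ≠ 0 := by
    intro h
    simp only [hLdef] at h
    rcases line_of_L hr₁ hy₁' hp₁' hq₁' hpq h with h' | h'
    · exact hyp h'
    · exact hyq h'
  have hLx : L x ≠ 0 := by
    intro h
    simp only [hLdef] at h
    rcases line_of_L hr₁ hx₁ hp₁' hq₁' hpq h with h' | h'
    · exact hxp h'
    · exact hxq h'
  have hLy'' : L w2 ≠ 0 := by
    intro h
    simp only [hLdef] at h
    rcases line_of_L hr₁ hy''₁ hp₁' hq₁' hpq h with h' | h'
    · exact hy''p h'
    · exact hy''q h'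
  have hLy''y : L w2 * L y < 0 := by
    obtain ⟨s4, t4, hs4, ht4, -, -, h⟩ := oseg_comb hLaff hco
    exact opp_sign hs4 ht4 hLy'' (by rw [← h]; exact hLc)
  -- first application of the four point lemma, to x y p q
  rcases four_point hr₁ x y p q hx₁ hy₁' hp₁' hq₁' hxy hxp hxq hyp hyq hpq with
    ⟨w, hw1, hw2⟩ | ⟨w, hw1, hw2⟩ | ⟨w, hw1, hw2⟩
  · -- w ∈ [x,y] ∩ [p,q] : the main case
    have hwx : w ≠ x := by
      rintro rfl
      rcases extreme_seg hr₁ hx₁ hp₁'.le hq₁'.le hw2 with h | h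
      exacts [hxp h, hxq h]
    have hwy : w ≠ y := by
      rintro rfl
      rcases extreme_seg hr₁ hy₁' hp₁'.le hq₁'.le hw2 with h | h
      exacts [hyp h, hyq h]
    have hwo : w ∈ openSegment ℝ x y :=
      mem_openSegment_of_ne_left_right (Ne.symm hwx) (Ne.symm hwy) hw1
    have hLw : L w = 0 := by
      obtain ⟨s5, t5, -, -, -, -, h⟩ := seg_comb hLaff hw2
      rw [h, hLp, hLq]; ring
    have hLxLy : L x * L y < 0 := by
      obtain ⟨s6, t6, hs6, ht6, -, -, h⟩ := oseg_comb hLaff hwo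
      exact opp_sign hs6 ht6 hLx (by rw [← h]; exact hLw)
    have hLxy'' : 0 < L x * L w2 := prod_pos_of_opp hLxLy hLy''y
    -- second application, to x w2 p q
    rcases four_point hr₁ x w2 p q hx₁ hy''₁ hp₁' hq₁' hxy'' hxp hxq hy''p hy''q hpq with
      ⟨u, hu1, hu2⟩ | ⟨u, hu1, hu2⟩ | ⟨u, hu1, hu2⟩
    · -- u ∈ [x,w2] ∩ [p,q] : impossible since x, w2 strictly on one side of line pq
      have hLu : L u = 0 := by
        obtain ⟨s7, t7, -, -, -, -, h⟩ := seg_comb hLaff hu2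
        rw [h, hLp, hLq]; ring
      obtain ⟨s8, t8, hs8, ht8, hst8, -, h8⟩ := seg_comb hLaff hu1
      rcases lt_or_gt_of_ne hLx with hneg | hpos
      · have hy''neg : L w2 < 0 := lemH hLxy'' hneg
        have h9 := cvx_neg hs8 ht8 hst8 hneg hy''neg
        rw [← h8, hLu] at h9
        linarith
      · have hy''pos : 0 < L w2 := lemH' hLxy'' hpos
        have h9 := cvx_pos hs8 ht8 hst8 hpos hy''pos
        rw [← h8, hLu] at h9
        linarith
    · -- u ∈ [x,p] ∩ [w2,q] : impossible by G signs
      obtain ⟨s9, t9, hs9, ht9, hst9, -, h9⟩ := seg_comb hGaff hu1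
      obtain ⟨sa, ta, hsa, hta, hsta, -, ha⟩ := seg_comb hGaff hu2
      have h1 : 0 ≤ G u := by rw [h9]; exact cvx_nonneg hs9 ht9 hGx hGp.le
      have h2 : G u < 0 := by rw [ha]; exact cvx_neg hsa hta hsta hGy'' hGq
      linarith
    · -- u ∈ [x,q] ∩ [w2,p] : impossible by H signs
      obtain ⟨s9, t9, hs9, ht9, hst9, -, h9⟩ := seg_comb hHaff hu1
      obtain ⟨sa, ta, hsa, hta, hsta, -, ha⟩ := seg_comb hHaff hu2
      have h1 : 0 < H u := by rw [h9]; exact cvx_pos hs9 ht9 hst9 hHx hHq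
      have h2 : H u ≤ 0 := by rw [ha]; exact cvx_nonpos hsa hta hHy''.le hHp
      linarith
  · -- w ∈ [x,p] ∩ [y,q] : impossible by G signs
    obtain ⟨s1, t1, hs1, ht1, hst1, -, h1⟩ := seg_comb hGaff hw1
    obtain ⟨s2, t2, hs2, ht2, hst2, hw2eq, h2⟩ := seg_comb hGaff hw2
    have hGw1 : 0 ≤ G w := by rw [h1]; exact cvx_nonneg hs1 ht1 hGx hGp.le
    have hGw2 : G w = t2 * G q := by rw [h2, hGy]; ring
    have ht20 : t2 = 0 := by
      rcases ht2.lt_or_eq with h | h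
      · exfalso
        have := mul_neg_of_pos_of_neg h hGq
        linarith [hGw1, hGw2]
      · exact h.symm
    have hwyeq : w = y := by
      rw [← hw2eq, ht20, show s2 = 1 from by linarith]
      simp
    rw [hwyeq] at hw1
    rcases extreme_seg hr₁ hy₁' hx₁.le hp₁'.le hw1 with h | h
    · exact hxy h.symm
    · exact hyp h
  · -- w ∈ [x,q] ∩ [y,p] : impossible by H signs
    obtain ⟨s1, t1, hs1, ht1, hst1, -, h1⟩ := seg_comb hHaff hw1
    obtain ⟨s2, t2, hs2, ht2, hst2, -, h2⟩ := seg_comb hHaff hw2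
    have hHw1 : 0 < H w := by rw [h1]; exact cvx_pos hs1 ht1 hst1 hHx hHq
    have hHw2 : H w ≤ 0 := by rw [h2]; exact cvx_nonpos hs2 ht2 hHy hHp
    linarith
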